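/- In G = ℤ² ⋊ ℤ/2ℤ (swap action) with a = ((1,0),0), t = ((0,0),1), every geodesic word over A = {a, a⁻¹, t, t⁻¹} contains at most two t-letters. -/

import Mathlib

/-- The coordinate-swapping automorphism of ℤ². -/
def swapAut : MulAut (Multiplicative (ℤ × ℤ)) :=
  AddEquiv.toMultiplicative (AddEquiv.prodComm : (ℤ × ℤ) ≃+ (ℤ × ℤ))

lemma swapAut_sq : swapAut ^ 2 = 1 := by
  apply MulEquiv.ext
  intro z
  show swapAut (swapAut z) = z
  cases z
  rfl

/-- The action of ℤ/2ℤ on ℤ² by swapping the two coordinates. -/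
def swapAction : Multiplicative (ZMod 2) →* MulAut (Multiplicative (ℤ × ℤ)) where
  toFun ε := swapAut ^ (Multiplicative.toAdd ε).val
  map_one' := rfl
  map_mul' x y := by
    show swapAut ^ _ = swapAut ^ _ * swapAut ^ _
    rw [← pow_add]
    have key : ∀ m n : ℕ, m % 2 = n % 2 → swapAut ^ m = swapAut ^ n := by
      intro m n h
      rw [← Nat.div_add_mod m 2, ← Nat.div_add_mod n 2, h, pow_add, pow_add,
        pow_mul, pow_mul, swapAut_sq]
      simp
    apply key
    have := ZMod.val_add (Multiplicative.toAdd x) (Multiplicative.toAdd y)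
    simp only [toAdd_mul] at *
    omega

/-- The group G = ℤ² ⋊ ℤ/2ℤ with the swap action. -/
abbrev GG := SemidirectProduct (Multiplicative (ℤ × ℤ)) (Multiplicative (ZMod 2)) swapAction

/-- The generator a = ((1,0), 0). -/
def ga : GG := SemidirectProduct.inl (Multiplicative.ofAdd ((1, 0) : ℤ × ℤ))

/-- The generator t = ((0,0), 1). -/
def gt : GG := SemidirectProduct.inr (Multiplicative.ofAdd (1 : ZMod 2))

/-- The element ((x,y), ε) of G. -/
def el (x y : ℤ) (ε : ZMod 2) : GG :=
  ⟨Multiplicative.ofAdd (x, y), Multiplicative.ofAdd ε⟩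

/-- The generating set A = {a, a⁻¹, t, t⁻¹}. -/
def GenSet : Set GG := {ga, ga⁻¹, gt, gt⁻¹}

/-- `w` is a word over the alphabet A. -/
def IsWord (w : List GG) : Prop := ∀ x ∈ w, x ∈ GenSet

/-- `w` is a word over A representing the group element `g` (via its product). -/
def Represents (w : List GG) (g : GG) : Prop := IsWord w ∧ w.prod = g

/-- The word length of `g`: minimal length of a word over A representing `g`. -/
noncomputable def wordLength (g : GG) : ℕ :=
  sInf {n | ∃ w : List GG, Represents w g ∧ w.length = n}

/-- A word over A is geodesic if no strictly shorter word over A represents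
the same element. -/
def IsGeodesic (w : List GG) : Prop :=
  IsWord w ∧ ∀ v : List GG, IsWord v → v.prod = w.prod → w.length ≤ v.length

open Classical in
/-- The number of t-letters of a word (occurrences of t and t⁻¹). -/
noncomputable def tCount (w : List GG) : ℕ :=
  w.countP (fun x => decide (x = gt ∨ x = gt⁻¹))

/-- The word aˣ over A: x letters `a` if x ≥ 0, |x| letters `a⁻¹` if x < 0. -/
def apow (x : ℤ) : List GG :=
  if 0 ≤ x then List.replicate x.toNat ga else List.replicate (-x).toNat ga⁻¹

/-- The word metric on G with respect to A. -/
noncomputable def dA (g h : GG) : ℕ := wordLength (g⁻¹ * h)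

/-- The point of G reached at time i along the word w (the endpoint if i
exceeds the length of w). -/
def pt (w : List GG) (i : ℕ) : GG := (w.take i).prod

/-- Words u and w synchronously k-fellow travel. -/
def FellowTravels (k : ℕ) (u w : List GG) : Prop :=
  ∀ i : ℕ, dA (pt u i) (pt w i) ≤ k

lemma swapAction_zero : swapAction (Multiplicative.ofAdd (0 : ZMod 2)) = 1 := by
  show swapAut ^ (Multiplicative.toAdd (Multiplicative.ofAdd (0:ZMod 2))).val = 1
  norm_num
lemma swapAction_one' : swapAction (Multiplicative.ofAdd (1 : ZMod 2)) = swapAut := by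
  show swapAut ^ (1 : ZMod 2).val = swapAut
  have : (1 : ZMod 2).val = 1 := rfl
  rw [this, pow_one]

lemma el_mul_zero (x y x' y' : ℤ) (ε' : ZMod 2) :
    el x y 0 * el x' y' ε' = el (x + x') (y + y') ε' := by
  apply SemidirectProduct.ext
  · show Multiplicative.ofAdd (x,y) * (swapAction (Multiplicative.ofAdd (0:ZMod 2))) (Multiplicative.ofAdd (x',y')) = _
    rw [swapAction_zero]
    rfl
  · show Multiplicative.ofAdd (0:ZMod 2) * Multiplicative.ofAdd ε' = Multiplicative.ofAdd ε'
    simp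

lemma gt_mul_el (x y : ℤ) (ε : ZMod 2) :
    gt * el x y ε = el y x (1 + ε) := by
  apply SemidirectProduct.ext
  · show Multiplicative.ofAdd ((0:ℤ),(0:ℤ)) * (swapAction (Multiplicative.ofAdd (1:ZMod 2))) (Multiplicative.ofAdd (x,y)) = _
    rw [swapAction_one']
    show Multiplicative.ofAdd ((0:ℤ),(0:ℤ)) * Multiplicative.ofAdd (y,x) = Multiplicative.ofAdd (y,x)
    simp
  · rfl

lemma el_mul_gt (x y : ℤ) (ε : ZMod 2) :
    el x y ε * gt = el x y (ε + 1) := by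
  apply SemidirectProduct.ext
  · show Multiplicative.ofAdd (x,y) * (swapAction (Multiplicative.ofAdd ε)) (Multiplicative.ofAdd ((0:ℤ),(0:ℤ))) = Multiplicative.ofAdd (x,y)
    have : (swapAction (Multiplicative.ofAdd ε)) (Multiplicative.ofAdd ((0:ℤ),(0:ℤ))) = 1 := by
      apply map_one
    rw [this, mul_one]
  · rfl

lemma gt_eq : gt = el 0 0 1 := rfl
lemma ga_eq : ga = el 1 0 0 := rfl
lemma ga_inv : ga⁻¹ = el (-1) 0 0 := by
  apply SemidirectProduct.ext
  · show (swapAction _) _ = _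
    simp [ga, swapAction_zero]
    rfl
  · rfl
lemma gt_inv : gt⁻¹ = gt := by
  apply SemidirectProduct.ext
  · show (swapAction _) _ = _
    have : (Multiplicative.ofAdd (1 : ZMod 2))⁻¹ = Multiplicative.ofAdd 1 := by decide
    show (swapAction ((Multiplicative.ofAdd (1:ZMod 2))⁻¹)) (Multiplicative.ofAdd (0,0) : Multiplicative (ℤ×ℤ))⁻¹ = Multiplicative.ofAdd (0,0)
    rw [this, swapAction_one']
    rfl
  · show (Multiplicative.ofAdd (1 : ZMod 2))⁻¹ = _
    decide

-- coordinates
def cX (g : GG) : ℤ := (Multiplicative.toAdd g.left).1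
def cY (g : GG) : ℤ := (Multiplicative.toAdd g.left).2
def cE (g : GG) : ZMod 2 := Multiplicative.toAdd g.right

lemma g_eq_el (g : GG) : g = el (cX g) (cY g) (cE g) := rfl

lemma ga_ne_gt : ga ≠ gt := by
  intro h
  have := congrArg cE h
  simp [cE, ga, gt] at this

lemma ga_inv_ne_gt : ga⁻¹ ≠ gt := by
  intro h
  rw [ga_inv] at h
  have := congrArg cE h
  simp [cE, el, gt] at this

lemma tCount_cons_ga (w : List GG) : tCount (ga :: w) = tCount w := by
  simp [tCount, List.countP_cons, gt_inv, ga_ne_gt]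

lemma tCount_cons_ga_inv (w : List GG) : tCount (ga⁻¹ :: w) = tCount w := by
  simp [tCount, List.countP_cons, gt_inv, ga_inv_ne_gt]

lemma tCount_cons_gt (w : List GG) : tCount (gt :: w) = tCount w + 1 := by
  simp [tCount, List.countP_cons]

lemma lower_bound (w : List GG) (hw : IsWord w) :
    (cX w.prod).natAbs + (cY w.prod).natAbs + tCount w ≤ w.length := by
  induction w with
  | nil =>
    simp [tCount]
    constructor <;> rfl
  | cons c w ih =>
    have hc : c = ga ∨ c = ga⁻¹ ∨ c = gt ∨ c = gt⁻¹ := by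
      have := hw c List.mem_cons_self
      simpa [GenSet] using this
    have hw' : IsWord w := fun x hx => hw x (List.mem_cons_of_mem _ hx)
    specialize ih hw'
    have hprod : (c :: w).prod = c * w.prod := List.prod_cons
    rw [gt_inv] at hc
    set g := w.prod with hg
    have gtcase : c = gt → (cX (c :: w).prod).natAbs + (cY (c :: w).prod).natAbs + tCount (c :: w) ≤ (c :: w).length := by
      rintro rfl
      have : gt * g = el (cY g) (cX g) (1 + cE g) := by
        rw [g_eq_el g, gt_mul_el]; rfl
      rw [hprod, this, tCount_cons_gt]
      simp only [List.length_cons]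
      have h1 : cX (el (cY g) (cX g) (1 + cE g)) = cY g := rfl
      have h2 : cY (el (cY g) (cX g) (1 + cE g)) = cX g := rfl
      rw [h1, h2]
      omega
    rcases hc with rfl | rfl | h | h
    · have : ga * g = el (1 + cX g) (cY g) (cE g) := by
        rw [g_eq_el g, ga_eq, el_mul_zero]
        rw [zero_add]
        rfl
      rw [hprod, this, tCount_cons_ga]
      simp only [List.length_cons]
      have h1 : cX (el (1 + cX g) (cY g) (cE g)) = 1 + cX g := rfl
      have h2 : cY (el (1 + cX g) (cY g) (cE g)) = cY g := rfl
      rw [h1, h2]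
      omega
    · have : ga⁻¹ * g = el (-1 + cX g) (cY g) (cE g) := by
        rw [g_eq_el g, ga_inv, el_mul_zero]
        rw [zero_add]
        rfl
      rw [hprod, this, tCount_cons_ga_inv]
      simp only [List.length_cons]
      have h1 : cX (el (-1 + cX g) (cY g) (cE g)) = -1 + cX g := rfl
      have h2 : cY (el (-1 + cX g) (cY g) (cE g)) = cY g := rfl
      rw [h1, h2]
      omega
    · exact gtcase h
    · exact gtcase h

-- apow lemmas
lemma ga_pow (n : ℕ) : ga ^ n = el n 0 0 := by
  induction n with
  | zero => rfl
  | succ k ih =>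
    rw [pow_succ', ih, ga_eq, el_mul_zero]
    have h1 : (1:ℤ) + (k:ℤ) = ((k+1 : ℕ) : ℤ) := by push_cast; ring
    rw [zero_add, h1]

lemma ga_inv_pow (n : ℕ) : ga⁻¹ ^ n = el (-(n : ℤ)) 0 0 := by
  induction n with
  | zero => rfl
  | succ k ih =>
    rw [pow_succ', ih, ga_inv, el_mul_zero]
    have h1 : (-1 : ℤ) + (-(k:ℤ)) = -((k+1 : ℕ):ℤ) := by push_cast; ring
    rw [zero_add, h1]

lemma apow_prod (x : ℤ) : (apow x).prod = el x 0 0 := by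
  unfold apow
  split
  · rw [List.prod_replicate, ga_pow]
    congr 1
    omega
  · rw [List.prod_replicate, ga_inv_pow]
    congr 1
    omega

lemma apow_length (x : ℤ) : (apow x).length = x.natAbs := by
  unfold apow
  split <;> simp <;> omega

lemma apow_isword (x : ℤ) : IsWord (apow x) := by
  intro c hc
  unfold apow at hc
  split at hc <;> rw [List.eq_of_mem_replicate hc] <;> simp [GenSet]

-- short representatives
lemma w1_prod (x y : ℤ) : (apow x ++ gt :: apow y).prod = el x y 1 := by
  rw [List.prod_append, List.prod_cons, apow_prod, apow_prod, gt_mul_el, el_mul_zero]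
  norm_num

lemma w2_prod (x y : ℤ) : (apow x ++ gt :: (apow y ++ [gt])).prod = el x y 0 := by
  rw [List.prod_append, List.prod_cons, List.prod_append, apow_prod, apow_prod,
    List.prod_singleton, el_mul_gt, gt_mul_el, el_mul_zero]
  norm_num
  congr 1

lemma w1_length (x y : ℤ) : (apow x ++ gt :: apow y).length = x.natAbs + y.natAbs + 1 := by
  simp [apow_length]
  omega

lemma w2_length (x y : ℤ) : (apow x ++ gt :: (apow y ++ [gt])).length = x.natAbs + y.natAbs + 2 := by
  simp [apow_length]
  omega

lemma w1_isword (x y : ℤ) : IsWord (apow x ++ gt :: apow y) := by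
  intro c hc
  simp at hc
  rcases hc with h | rfl | h
  · exact apow_isword x c h
  · simp [GenSet]
  · exact apow_isword y c h

lemma w2_isword (x y : ℤ) : IsWord (apow x ++ gt :: (apow y ++ [gt])) := by
  intro c hc
  simp at hc
  rcases hc with h | rfl | h | rfl
  · exact apow_isword x c h
  · simp [GenSet]
  · exact apow_isword y c h
  · simp [GenSet]


/-- Every geodesic word over A contains at most two t-letters. -/
theorem geodesic_tCount_le_two (w : List GG) (hw : IsGeodesic w) : tCount w ≤ 2 := by
  by_contra h
  push_neg at h
  have hlow := lower_bound w hw.1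
  set x := cX w.prod
  set y := cY w.prod
  have hε : cE w.prod = 0 ∨ cE w.prod = 1 := by
    have : ∀ ε : ZMod 2, ε = 0 ∨ ε = 1 := by decide
    exact this _
  rcases hε with hε | hε
  · have hv := hw.2 (apow x ++ gt :: (apow y ++ [gt])) (w2_isword x y) (by
      rw [w2_prod, ← hε]
      exact (g_eq_el w.prod).symm)
    rw [w2_length] at hv
    omega
  · have hv := hw.2 (apow x ++ gt :: apow y) (w1_isword x y) (by
      rw [w1_prod, ← hε]
      exact (g_eq_el w.prod).symm)
    rw [w1_length] at hv
    omega
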